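/- Let r_min ≥ 0, set θ = 2^{r_min} − 1, let Ψ > 0, let λ_1, …, λ_K be positive reals, let ρ_{1,min}, …, ρ_{K,min} satisfy ρ_{i,min} = θ·(Σ_{j=1}^{i-1} ρ_{j,min} + Ψ/λ_i), let Δρ_1, …, Δρ_K be nonnegative reals, and set ρ_j = ρ_{j,min} + Δρ_j. Then for every i, the excess rate of user i satisfies log₂(1 + ρ_i λ_i/(Σ_{j=1}^{i-1} ρ_j λ_i + Ψ)) − r_min = log₂(1 + (Δρ_i − θ·Σ_{j=1}^{i-1} Δρ_j) / (Σ_{j=1}^{i} ρ_{j,min} + Ψ/λ_i + 2^{r_min}·Σ_{j=1}^{i-1} Δρ_j)). -/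

import Mathlib

/-- Unscaled excess-rate identity (A.5) of Proposition 1. -/
theorem stmt_4 (K : ℕ) (rmin : ℝ) (hr : 0 ≤ rmin) (Ψ : ℝ) (hΨ : 0 < Ψ)
    (lam : ℕ → ℝ) (hlam : ∀ i, 1 ≤ i → i ≤ K → 0 < lam i)
    (ρmin : ℕ → ℝ)
    (hρmin : ∀ i, 1 ≤ i → i ≤ K →
      ρmin i = ((2:ℝ) ^ rmin - 1) * (∑ j ∈ Finset.Icc 1 (i - 1), ρmin j + Ψ / lam i))
    (Δρ : ℕ → ℝ) (hΔ : ∀ i, 1 ≤ i → i ≤ K → 0 ≤ Δρ i)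
    (ρ : ℕ → ℝ) (hρ : ∀ j, ρ j = ρmin j + Δρ j) :
    ∀ i, 1 ≤ i → i ≤ K →
      Real.logb 2 (1 + ρ i * lam i / (∑ j ∈ Finset.Icc 1 (i - 1), ρ j * lam i + Ψ)) - rmin
        = Real.logb 2 (1 +
            (Δρ i - ((2:ℝ) ^ rmin - 1) * ∑ j ∈ Finset.Icc 1 (i - 1), Δρ j)
              / (∑ j ∈ Finset.Icc 1 i, ρmin j + Ψ / lam i
                  + (2:ℝ) ^ rmin * ∑ j ∈ Finset.Icc 1 (i - 1), Δρ j)) := by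
  have h2 : (1:ℝ) < 2 := one_lt_two
  have hpow : (0:ℝ) < (2:ℝ) ^ rmin := Real.rpow_pos_of_pos (by norm_num) _
  have hθ : 0 ≤ (2:ℝ) ^ rmin - 1 := by
    have h := Real.rpow_le_rpow_of_exponent_le (le_of_lt h2) hr
    rw [Real.rpow_zero] at h
    linarith
  -- nonnegativity of ρmin on [1,K]
  have hnn : ∀ j, 1 ≤ j → j ≤ K → 0 ≤ ρmin j := by
    intro j
    induction j using Nat.strong_induction_on with
    | _ j ih =>
      intro h1 hK
      rw [hρmin j h1 hK]
      have hsum : 0 ≤ ∑ k ∈ Finset.Icc 1 (j - 1), ρmin k := by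
        apply Finset.sum_nonneg
        intro k hk
        rw [Finset.mem_Icc] at hk
        exact ih k (lt_of_le_of_lt hk.2 (Nat.pred_lt (Nat.one_le_iff_ne_zero.mp h1)))
          hk.1 (hk.2.trans ((Nat.sub_le j 1).trans hK))
      have hc : 0 < Ψ / lam j := div_pos hΨ (hlam j h1 hK)
      positivity
  intro i h1 hK
  set θ : ℝ := (2:ℝ) ^ rmin - 1 with hθdef
  set S : ℝ := ∑ j ∈ Finset.Icc 1 (i - 1), ρmin j with hSdef
  set D : ℝ := ∑ j ∈ Finset.Icc 1 (i - 1), Δρ j with hDdef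
  set c : ℝ := Ψ / lam i with hcdef
  have hlami : 0 < lam i := hlam i h1 hK
  have hc : 0 < c := div_pos hΨ hlami
  have hS : 0 ≤ S := by
    apply Finset.sum_nonneg
    intro k hk
    rw [Finset.mem_Icc] at hk
    exact hnn k hk.1 (by omega)
  have hD : 0 ≤ D := by
    apply Finset.sum_nonneg
    intro k hk
    rw [Finset.mem_Icc] at hk
    exact hΔ k hk.1 (hk.2.trans ((Nat.sub_le i 1).trans hK))
  have hρi : ρmin i = θ * (S + c) := hρmin i h1 hK
  have hΔi : 0 ≤ Δρ i := hΔ i h1 hK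
  have hρminnn : 0 ≤ ρmin i := hnn i h1 hK
  set A : ℝ := S + D + c with hAdef
  have hA : 0 < A := by positivity
  set N : ℝ := A + ρ i with hNdef
  have hρival : ρ i = ρmin i + Δρ i := hρ i
  have hN : 0 < N := by
    have : 0 ≤ ρ i := by rw [hρival]; positivity
    positivity
  -- sum of ρ over Icc 1 (i-1)
  have hsumρ : ∑ j ∈ Finset.Icc 1 (i - 1), ρ j = S + D := by
    rw [hSdef, hDdef, ← Finset.sum_add_distrib]
    exact Finset.sum_congr rfl fun j _ => hρ j
  -- LHS denominator
  have hΨeq : Ψ = c * lam i := by rw [hcdef, div_mul_cancel₀ _ (ne_of_gt hlami)]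
  have hden1 : ∑ j ∈ Finset.Icc 1 (i - 1), ρ j * lam i + Ψ = A * lam i := by
    rw [← Finset.sum_mul, hsumρ, hΨeq, hAdef]; ring
  -- sum over Icc 1 i
  have hsum2 : ∑ j ∈ Finset.Icc 1 i, ρmin j = S + ρmin i := by
    have hi : i = (i - 1) + 1 := (Nat.succ_pred_eq_of_pos (by omega)).symm
    rw [hi, Finset.sum_Icc_succ_top (by omega), ← hi, hSdef]
  -- RHS denominator equals 2^rmin * A
  have hden2 : ∑ j ∈ Finset.Icc 1 i, ρmin j + Ψ / lam i + (2:ℝ) ^ rmin * D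
      = (2:ℝ) ^ rmin * A := by
    rw [hsum2, hρi, hAdef, hθdef, ← hcdef]; ring
  -- LHS argument
  have hlhsarg : 1 + ρ i * lam i / (∑ j ∈ Finset.Icc 1 (i - 1), ρ j * lam i + Ψ)
      = N / A := by
    rw [hden1, hNdef]
    rw [mul_div_mul_right _ _ (ne_of_gt hlami)]
    field_simp
  -- RHS argument
  have hrhsarg : 1 + (Δρ i - θ * D) / ((2:ℝ) ^ rmin * A) = N / ((2:ℝ) ^ rmin * A) := by
    have hNalt : N = (2:ℝ) ^ rmin * A + (Δρ i - θ * D) := by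
      rw [hNdef, hρival, hρi, hAdef, hθdef]; ring
    rw [hNalt]
    field_simp
  rw [hlhsarg, hden2, hrhsarg,
    Real.logb_div (ne_of_gt hN) (ne_of_gt hA),
    Real.logb_div (ne_of_gt hN) (by positivity),
    Real.logb_mul (ne_of_gt hpow) (ne_of_gt hA),
    Real.logb_rpow (by norm_num : (0:ℝ) < 2) (by norm_num)]
  ring
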